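/- Suppose f ∈ H satisfies P₁f = 0 and f is orthogonal both to ker P₁ ∩ ran P₂ and to ker P₁ ∩ ker P₂ (so f lies in the part of the generic subspace of the two projections annihilated by P₁). Then for every r ∈ (0,1): V_D(f) = 2‖f‖² and V_R(f,r) = ((1+r)/(1−r))·‖f‖². Consequently, for every τ > 0 and f ≠ 0, V_R†(f,r)/V_D†(f) = ((rτ+1−r)/(τ+1))·((1+r)/(1−r)), which tends to 0 as τ → ∞ with r → 0. -/

import Mathlib

set_option synthInstance.maxHeartbeats 1000000
set_option maxHeartbeats 1000000


open scoped RealInnerProductSpace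

noncomputable def VD {H : Type*} [NormedAddCommGroup H] [InnerProductSpace ℝ H]
    (P₁ P₂ : H →L[ℝ] H) (f : H) : ℝ :=
  ‖f‖ ^ 2
    + ∑' s : ℕ, ⟪f, ((P₁ * P₂) ^ s * P₁) f⟫
    + ∑' s : ℕ, ⟪f, ((P₁ * P₂) ^ (s + 1)) f⟫
    + ∑' s : ℕ, ⟪f, ((P₂ * P₁) ^ s * P₂) f⟫
    + ∑' s : ℕ, ⟪f, ((P₂ * P₁) ^ (s + 1)) f⟫

noncomputable def VR {H : Type*} [NormedAddCommGroup H] [InnerProductSpace ℝ H]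
    (P₁ P₂ : H →L[ℝ] H) (r : ℝ) (f : H) : ℝ :=
  ‖f‖ ^ 2 + 2 * ∑' t : ℕ, ⟪f, (((1 - r) • P₁ + r • P₂) ^ (t + 1)) f⟫

noncomputable def kOne (r : ℝ) : ℝ :=
  1 - r + r ^ 2 + Real.sqrt (r ^ 2 * (1 - r) ^ 2 + (1 - 2 * r) ^ 2)

noncomputable def kTwo (r : ℝ) : ℝ :=
  (1 - r + r ^ 2 + Real.sqrt (r ^ 2 * (1 - r) ^ 2 + (1 - 2 * r) ^ 2)) / (2 * r * (1 - r))

noncomputable def kappa (τ r : ℝ) : ℝ := (τ + 1) / (2 * (r * τ + 1 - r))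

noncomputable def VDdag {H : Type*} [NormedAddCommGroup H] [InnerProductSpace ℝ H]
    (P₁ P₂ : H →L[ℝ] H) (τ : ℝ) (f : H) : ℝ := ((1 + τ) / 2) * VD P₁ P₂ f

noncomputable def VRdag {H : Type*} [NormedAddCommGroup H] [InnerProductSpace ℝ H]
    (P₁ P₂ : H →L[ℝ] H) (r τ : ℝ) (f : H) : ℝ := (r * τ + 1 - r) * VR P₁ P₂ r f

section Aux

variable {H : Type*} [NormedAddCommGroup H] [InnerProductSpace ℝ H] [CompleteSpace H]

lemma aux_pow_apply_norm_le (A : H →L[ℝ] H) (x : H) (s : ℕ) :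
    ‖(A ^ s) x‖ ≤ ‖A‖ ^ s * ‖x‖ := by
  induction s with
  | zero => simp
  | succ n ih =>
    rw [pow_succ', ContinuousLinearMap.mul_apply]
    calc ‖A ((A ^ n) x)‖ ≤ ‖A‖ * ‖(A ^ n) x‖ := A.le_opNorm _
      _ ≤ ‖A‖ * (‖A‖ ^ n * ‖x‖) := by
          exact mul_le_mul_of_nonneg_left ih (norm_nonneg A)
      _ = ‖A‖ ^ (n + 1) * ‖x‖ := by ring

lemma aux_proj_norm_le_one (P : H →L[ℝ] H) (hsa : IsSelfAdjoint P) (hidem : P * P = P) :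
    ‖P‖ ≤ 1 := by
  refine P.opNorm_le_bound zero_le_one fun x => ?_
  have h1 : ⟪P x, P x⟫ = ⟪x, P x⟫ := by
    calc ⟪P x, P x⟫ = ⟪P (P x), x⟫ := (hsa.isSymmetric (P x) x).symm
      _ = ⟪P x, x⟫ := by
          rw [show P (P x) = P x from by rw [← ContinuousLinearMap.mul_apply, hidem]]
      _ = ⟪x, P x⟫ := real_inner_comm _ _
  have h2 : ‖P x‖ ^ 2 ≤ ‖x‖ * ‖P x‖ := by
    rw [← real_inner_self_eq_norm_sq, h1]
    exact real_inner_le_norm x (P x)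
  nlinarith [norm_nonneg (P x), norm_nonneg x]

lemma aux_norm_swap (P₁ P₂ : H →L[ℝ] H) (h1sa : IsSelfAdjoint P₁) (h2sa : IsSelfAdjoint P₂) :
    ‖P₂ * P₁‖ = ‖P₁ * P₂‖ := by
  have h1 : ContinuousLinearMap.adjoint P₁ = P₁ := ContinuousLinearMap.isSelfAdjoint_iff'.mp h1sa
  have h2 : ContinuousLinearMap.adjoint P₂ = P₂ := ContinuousLinearMap.isSelfAdjoint_iff'.mp h2sa
  have h : ContinuousLinearMap.adjoint (P₁ * P₂) = P₂ * P₁ := by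
    rw [show P₁ * P₂ = P₁ ∘L P₂ from rfl, ContinuousLinearMap.adjoint_comp, h1, h2]; rfl
  rw [← h]
  exact LinearIsometryEquiv.norm_map ContinuousLinearMap.adjoint (P₁ * P₂)

lemma aux_VD {P₁ P₂ : H →L[ℝ] H}
    (h1sa : IsSelfAdjoint P₁) (h1idem : P₁ * P₁ = P₁)
    (h2sa : IsSelfAdjoint P₂) (h2idem : P₂ * P₂ = P₂)
    (hnorm : ‖P₁ * P₂‖ < 1)
    {f : H} (hf : P₁ f = 0)
    (horth₂ : ∀ g : H, P₁ g = 0 → P₂ g = 0 → ⟪f, g⟫ = 0) :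
    VD P₁ P₂ f = 2 * ‖f‖ ^ 2 := by
  have hinner1 : ∀ y : H, ⟪f, P₁ y⟫ = 0 := by
    intro y
    have hsy := h1sa.isSymmetric f y
    simp only [ContinuousLinearMap.coe_coe] at hsy
    rw [← hsy, hf, inner_zero_left]
  have hs1 : ∀ s : ℕ, ⟪f, ((P₁ * P₂) ^ s * P₁) f⟫ = (0 : ℝ) := by
    intro s
    rw [ContinuousLinearMap.mul_apply, hf, map_zero, inner_zero_right]
  have hs2 : ∀ s : ℕ, ⟪f, ((P₁ * P₂) ^ (s + 1)) f⟫ = (0 : ℝ) := by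
    intro s
    rw [pow_succ', ContinuousLinearMap.mul_apply, ContinuousLinearMap.mul_apply]
    exact hinner1 _
  have hs4 : ∀ s : ℕ, ⟪f, ((P₂ * P₁) ^ (s + 1)) f⟫ = (0 : ℝ) := by
    intro s
    rw [pow_succ, ContinuousLinearMap.mul_apply, ContinuousLinearMap.mul_apply, hf, map_zero,
      map_zero, inner_zero_right]
  -- the remaining sum
  have hswap : ‖P₂ * P₁‖ = ‖P₁ * P₂‖ := aux_norm_swap P₁ P₂ h1sa h2sa
  have hsum : Summable (fun s : ℕ => ((P₂ * P₁) ^ s * P₂) f) := by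
    refine Summable.of_norm_bounded (g := fun s => ‖P₁ * P₂‖ ^ s * ‖P₂ f‖)
      ((summable_geometric_of_lt_one (norm_nonneg _) hnorm).mul_right _) fun s => ?_
    rw [ContinuousLinearMap.mul_apply, ← hswap]
    exact aux_pow_apply_norm_le _ _ s
  set u : H := ∑' s : ℕ, ((P₂ * P₁) ^ s * P₂) f with hu
  have hterm : ∀ s : ℕ, ((P₂ * P₁) ^ (s + 1) * P₂) f
      = (P₂ * P₁) (((P₂ * P₁) ^ s * P₂) f) := by
    intro s
    rw [pow_succ', mul_assoc, ContinuousLinearMap.mul_apply]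
  have hshift : u = P₂ f + (P₂ * P₁) u := by
    calc u = ((P₂ * P₁) ^ 0 * P₂) f + ∑' s : ℕ, ((P₂ * P₁) ^ (s + 1) * P₂) f :=
        Summable.tsum_eq_zero_add hsum
      _ = P₂ f + (P₂ * P₁) u := by
        rw [tsum_congr hterm, ← (P₂ * P₁).map_tsum hsum, ← hu]
        simp
  have hP2u : P₂ u = u := by
    conv_lhs => rw [hshift]
    rw [map_add]
    have e1 : P₂ (P₂ f) = P₂ f := by rw [← ContinuousLinearMap.mul_apply, h2idem]
    have e2 : P₂ ((P₂ * P₁) u) = (P₂ * P₁) u := by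
      rw [ContinuousLinearMap.mul_apply, ← ContinuousLinearMap.mul_apply P₂ P₂, h2idem]
    rw [e1, e2, ← hshift]
  have hP2P1u : (P₂ * P₁) u = u - P₂ f := by
    rw [eq_sub_iff_add_eq, add_comm, ← hshift]
  have hPh1 : P₁ (u - f - P₁ u) = 0 := by
    have e : P₁ (P₁ u) = P₁ u := by rw [← ContinuousLinearMap.mul_apply, h1idem]
    rw [map_sub, map_sub, hf, e]
    abel
  have hPh2 : P₂ (u - f - P₁ u) = 0 := by
    rw [map_sub, map_sub, hP2u, ← ContinuousLinearMap.mul_apply P₂ P₁, hP2P1u]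
    abel
  have hfu : ⟪f, u⟫ = ‖f‖ ^ 2 := by
    have h0 : ⟪f, u - f - P₁ u⟫ = 0 := horth₂ _ hPh1 hPh2
    rw [inner_sub_right, inner_sub_right, hinner1, real_inner_self_eq_norm_sq] at h0
    linarith
  have hs3 : ∑' s : ℕ, ⟪f, ((P₂ * P₁) ^ s * P₂) f⟫ = ‖f‖ ^ 2 := by
    have := (ContinuousLinearMap.map_tsum (innerSL ℝ f) hsum).symm
    simp only [innerSL_apply_apply] at this
    rw [this, ← hu, hfu]
  rw [VD]
  rw [tsum_congr hs1, tsum_congr hs2, tsum_congr hs4, hs3, tsum_zero]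
  ring

lemma aux_VR {P₁ P₂ : H →L[ℝ] H}
    (h1sa : IsSelfAdjoint P₁) (h1idem : P₁ * P₁ = P₁)
    (h2sa : IsSelfAdjoint P₂) (h2idem : P₂ * P₂ = P₂)
    (hnorm : ‖P₁ * P₂‖ < 1)
    {f : H} (hf : P₁ f = 0)
    (horth₂ : ∀ g : H, P₁ g = 0 → P₂ g = 0 → ⟪f, g⟫ = 0)
    {r : ℝ} (hr0 : 0 < r) (hr1 : r < 1) :
    VR P₁ P₂ r f = ((1 + r) / (1 - r)) * ‖f‖ ^ 2 := by
  have hinner1 : ∀ y : H, ⟪f, P₁ y⟫ = 0 := by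
    intro y
    have hsy := h1sa.isSymmetric f y
    simp only [ContinuousLinearMap.coe_coe] at hsy
    rw [← hsy, hf, inner_zero_left]
  have h1r : (1 : ℝ) - r ≠ 0 := by linarith
  set Q : H →L[ℝ] H := (1 - r) • P₁ + r • P₂ with hQdef
  have hQsa : IsSelfAdjoint Q :=
    ((IsSelfAdjoint.all (1 - r)).smul h1sa).add ((IsSelfAdjoint.all r).smul h2sa)
  have hn1 : ‖P₁‖ ≤ 1 := aux_proj_norm_le_one P₁ h1sa h1idem
  have hn2 : ‖P₂‖ ≤ 1 := aux_proj_norm_le_one P₂ h2sa h2idem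
  have hswap : ‖P₂ * P₁‖ = ‖P₁ * P₂‖ := aux_norm_swap P₁ P₂ h1sa h2sa
  have hQQ : Q * Q = ((1 - r) * (1 - r)) • P₁ + ((1 - r) * r) • (P₁ * P₂)
      + ((r * (1 - r)) • (P₂ * P₁) + (r * r) • P₂) := by
    rw [hQdef]
    simp only [add_mul, mul_add, smul_mul_assoc, mul_smul_comm, smul_smul, h1idem, h2idem]
    module
  have hQlt : ‖Q‖ < 1 := by
    have hcsq : ‖Q‖ * ‖Q‖ = ‖Q * Q‖ := by
      conv_lhs => rw [← CStarRing.norm_star_mul_self (x := Q)]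
      rw [hQsa.star_eq]
    have hb : ‖Q * Q‖ ≤ (1 - r) * (1 - r) + (1 - r) * r * ‖P₁ * P₂‖
        + (r * (1 - r) * ‖P₁ * P₂‖ + r * r) := by
      rw [hQQ]
      refine le_trans (norm_add_le _ _) ?_
      have n1 : ‖((1 - r) * (1 - r)) • P₁‖ = |(1 - r) * (1 - r)| * ‖P₁‖ := norm_smul ((1 - r) * (1 - r)) P₁
      have n2 : ‖((1 - r) * r) • (P₁ * P₂)‖ = |(1 - r) * r| * ‖P₁ * P₂‖ := norm_smul ((1 - r) * r) (P₁ * P₂)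
      have n3 : ‖(r * (1 - r)) • (P₂ * P₁)‖ = |r * (1 - r)| * ‖P₂ * P₁‖ := norm_smul (r * (1 - r)) (P₂ * P₁)
      have n4 : ‖(r * r) • P₂‖ = |r * r| * ‖P₂‖ := norm_smul (r * r) P₂
      rw [abs_of_nonneg (by nlinarith)] at n1
      rw [abs_of_nonneg (by nlinarith)] at n2
      rw [abs_of_nonneg (by nlinarith), hswap] at n3
      rw [abs_of_nonneg (by nlinarith)] at n4
      have b1 := norm_add_le (((1 - r) * (1 - r)) • P₁) (((1 - r) * r) • (P₁ * P₂))
      have b2 := norm_add_le ((r * (1 - r)) • (P₂ * P₁)) ((r * r) • P₂)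
      have hPn1 : (1 - r) * (1 - r) * ‖P₁‖ ≤ (1 - r) * (1 - r) := by nlinarith
      have hPn2 : r * r * ‖P₂‖ ≤ r * r := by nlinarith
      have hPn3 : (1 - r) * r * ‖P₁ * P₂‖ ≤ (1 - r) * r * ‖P₁ * P₂‖ := le_refl _
      linarith
    have hrr : (0:ℝ) < r * (1 - r) := mul_pos hr0 (by linarith)
    nlinarith [norm_nonneg Q, norm_nonneg (P₁ * P₂), mul_self_nonneg (‖Q‖ - 1),
      mul_pos hrr (sub_pos.mpr hnorm)]
  have hvsum : Summable (fun t : ℕ => (Q ^ (t + 1)) f) := by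
    refine Summable.of_norm_bounded (g := fun t => ‖Q‖ ^ t * (‖Q‖ * ‖f‖))
      ((summable_geometric_of_lt_one (norm_nonneg _) hQlt).mul_right _) fun t => ?_
    calc ‖(Q ^ (t + 1)) f‖ ≤ ‖Q‖ ^ (t + 1) * ‖f‖ := aux_pow_apply_norm_le _ _ _
      _ = ‖Q‖ ^ t * (‖Q‖ * ‖f‖) := by ring
  set v : H := ∑' t : ℕ, (Q ^ (t + 1)) f with hv
  have hterm : ∀ t : ℕ, (Q ^ (t + 1 + 1)) f = Q ((Q ^ (t + 1)) f) := by
    intro t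
    rw [pow_succ', ContinuousLinearMap.mul_apply]
  have hshift : v = Q f + Q v := by
    calc v = (Q ^ (0 + 1)) f + ∑' t : ℕ, (Q ^ (t + 1 + 1)) f := Summable.tsum_eq_zero_add hvsum
      _ = Q f + Q v := by
        rw [tsum_congr hterm, ← Q.map_tsum hvsum, ← hv]
        simp
  have hQw : v = Q (f + v) := by rw [map_add, ← hshift]
  set p : H := P₁ v with hp
  have hP1fv : P₁ (f + v) = p := by rw [map_add, hf, zero_add]
  have hE1 : v = (1 - r) • p + r • P₂ (f + v) := by
    conv_lhs => rw [hQw]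
    rw [hQdef]
    rw [ContinuousLinearMap.add_apply, ContinuousLinearMap.smul_apply,
      ContinuousLinearMap.smul_apply, hP1fv]
  have hP1p : P₁ p = p := by
    rw [hp, ← ContinuousLinearMap.mul_apply, h1idem]
  have hB : P₂ v = (1 - r) • P₂ p + r • P₂ (f + v) := by
    conv_lhs => rw [hE1]
    rw [map_add, map_smul, map_smul]
    congr 2
    rw [← ContinuousLinearMap.mul_apply P₂ P₂, h2idem]
  have hP2f : P₂ f = P₂ (f + v) - P₂ v := by rw [map_add]; abel
  set y : H := v - (r / (1 - r)) • f - p with hy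
  have hy1 : P₁ y = 0 := by
    rw [hy, map_sub, map_sub, map_smul, hf, smul_zero, hP1p, ← hp]
    abel
  have hy2 : P₂ y = 0 := by
    have e : P₂ y = P₂ v - (r / (1 - r)) • P₂ f - P₂ p := by
      rw [hy, map_sub, map_sub, map_smul]
    rw [e, hP2f, hB]
    match_scalars <;> (try field_simp) <;> ring
  have hfy : ⟪f, y⟫ = 0 := horth₂ y hy1 hy2
  have hfv : ⟪f, v⟫ = (r / (1 - r)) * ‖f‖ ^ 2 := by
    have hvdecomp : v = (r / (1 - r)) • f + p + y := by rw [hy]; abel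
    rw [hvdecomp, inner_add_right, inner_add_right, hfy, real_inner_smul_right,
      real_inner_self_eq_norm_sq, hp, hinner1]
    ring
  have hsum3 : ∑' t : ℕ, ⟪f, (Q ^ (t + 1)) f⟫ = (r / (1 - r)) * ‖f‖ ^ 2 := by
    have := (ContinuousLinearMap.map_tsum (innerSL ℝ f) hvsum).symm
    simp only [innerSL_apply_apply] at this
    rw [this, ← hv, hfv]
  rw [VR, ← hQdef, hsum3]
  field_simp
  ring

end Aux

theorem stmt4 {H : Type*} [NormedAddCommGroup H] [InnerProductSpace ℝ H] [CompleteSpace H]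
    (P₁ P₂ : H →L[ℝ] H)
    (h1sa : IsSelfAdjoint P₁) (h1idem : P₁ * P₁ = P₁)
    (h2sa : IsSelfAdjoint P₂) (h2idem : P₂ * P₂ = P₂)
    (hnorm : ‖P₁ * P₂‖ < 1)
    (f : H) (hf : P₁ f = 0)
    (horth₁ : ∀ g : H, P₁ g = 0 → g ∈ LinearMap.range (P₂ : H →ₗ[ℝ] H) → ⟪f, g⟫ = 0)
    (horth₂ : ∀ g : H, P₁ g = 0 → P₂ g = 0 → ⟪f, g⟫ = 0) :
    (∀ r ∈ Set.Ioo (0 : ℝ) 1,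
      VD P₁ P₂ f = 2 * ‖f‖ ^ 2 ∧ VR P₁ P₂ r f = ((1 + r) / (1 - r)) * ‖f‖ ^ 2) ∧
    (f ≠ 0 →
      (∀ r ∈ Set.Ioo (0 : ℝ) 1, ∀ τ : ℝ, 0 < τ →
        VRdag P₁ P₂ r τ f / VDdag P₁ P₂ τ f
          = ((r * τ + 1 - r) / (τ + 1)) * ((1 + r) / (1 - r))) ∧
      (∀ rf : ℝ → ℝ, (∀ τ : ℝ, rf τ ∈ Set.Ioo (0 : ℝ) 1) →
        Filter.Tendsto rf Filter.atTop (nhds 0) →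
        Filter.Tendsto (fun τ : ℝ => VRdag P₁ P₂ (rf τ) τ f / VDdag P₁ P₂ τ f)
          Filter.atTop (nhds 0))) := by
  have hVD : VD P₁ P₂ f = 2 * ‖f‖ ^ 2 :=
    aux_VD h1sa h1idem h2sa h2idem hnorm hf horth₂
  have hVR : ∀ r ∈ Set.Ioo (0 : ℝ) 1, VR P₁ P₂ r f = ((1 + r) / (1 - r)) * ‖f‖ ^ 2 :=
    fun r hr => aux_VR h1sa h1idem h2sa h2idem hnorm hf horth₂ hr.1 hr.2
  refine ⟨fun r hr => ⟨hVD, hVR r hr⟩, fun hf0 => ?_⟩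
  have hF : ‖f‖ ^ 2 ≠ 0 := pow_ne_zero _ (norm_ne_zero_iff.mpr hf0)
  have hratio : ∀ r ∈ Set.Ioo (0 : ℝ) 1, ∀ τ : ℝ, 0 < τ →
      VRdag P₁ P₂ r τ f / VDdag P₁ P₂ τ f
        = ((r * τ + 1 - r) / (τ + 1)) * ((1 + r) / (1 - r)) := by
    intro r hr τ hτ
    have h1r : (1 : ℝ) - r ≠ 0 := by have := hr.2; intro h; linarith
    have hτ1 : (1 : ℝ) + τ ≠ 0 := by linarith
    rw [VRdag, VDdag, hVD, hVR r hr]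
    field_simp
    ring
  refine ⟨hratio, fun rf hrf hrf0 => ?_⟩
  have heq : (fun τ : ℝ => VRdag P₁ P₂ (rf τ) τ f / VDdag P₁ P₂ τ f)
      =ᶠ[Filter.atTop] (fun τ : ℝ =>
        ((rf τ * τ + 1 - rf τ) / (τ + 1)) * ((1 + rf τ) / (1 - rf τ))) := by
    filter_upwards [Filter.eventually_gt_atTop (0 : ℝ)] with τ hτ
    exact hratio (rf τ) (hrf τ) τ hτ
  rw [Filter.tendsto_congr' heq]
  have hub : Filter.Tendsto (fun τ : ℝ => 3 * (rf τ + (τ + 1)⁻¹)) Filter.atTop (nhds 0) := by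
    have h1 : Filter.Tendsto (fun τ : ℝ => (τ + 1)⁻¹) Filter.atTop (nhds 0) :=
      (Filter.tendsto_atTop_add_const_right _ 1 Filter.tendsto_id).inv_tendsto_atTop
    have := (hrf0.add h1).const_mul (3 : ℝ)
    simpa only [add_zero, mul_zero] using this
  refine tendsto_of_tendsto_of_tendsto_of_le_of_le' tendsto_const_nhds hub ?_ ?_
  · filter_upwards [Filter.eventually_ge_atTop (0 : ℝ)] with τ hτ
    have h0 := (hrf τ).1
    have h1 := (hrf τ).2
    have : (0:ℝ) < τ + 1 := by linarith
    refine mul_nonneg (div_nonneg (by nlinarith) (by linarith))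
      (div_nonneg (by linarith) (by linarith))
  · filter_upwards [Filter.eventually_ge_atTop (0 : ℝ),
      hrf0.eventually_lt_const (by norm_num : (0:ℝ) < 1/2)] with τ hτ hhalf
    have h0 := (hrf τ).1
    have h1 := (hrf τ).2
    have hB : (0:ℝ) < τ + 1 := by linarith
    have hA : (rf τ * τ + 1 - rf τ) / (τ + 1) ≤ rf τ + (τ + 1)⁻¹ := by
      rw [div_le_iff₀ hB]
      have e : (rf τ + (τ + 1)⁻¹) * (τ + 1) = rf τ * (τ + 1) + 1 := by
        field_simp
      rw [e]
      nlinarith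
    have hC : (1 + rf τ) / (1 - rf τ) ≤ 3 := by
      rw [div_le_iff₀ (by linarith : (0:ℝ) < 1 - rf τ)]
      linarith
    have hCnn : (0:ℝ) ≤ (1 + rf τ) / (1 - rf τ) :=
      div_nonneg (by linarith) (by linarith)
    have hAnn : (0:ℝ) ≤ rf τ + (τ + 1)⁻¹ := by positivity
    calc (rf τ * τ + 1 - rf τ) / (τ + 1) * ((1 + rf τ) / (1 - rf τ))
        ≤ (rf τ + (τ + 1)⁻¹) * 3 := by
          exact mul_le_mul hA hC hCnn hAnn
      _ = 3 * (rf τ + (τ + 1)⁻¹) := by ring
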